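/- Let V be a real symmetric 2n×2n matrix with V + iΩ ≻ 0. Then every complex eigenvalue μ of the matrix VΩ is purely imaginary with |μ| > 1; equivalently, every complex eigenvalue of (VΩ)² is a real number strictly less than −1, so that I + (VΩ)^{-2} has all its eigenvalues real and strictly between 0 and 1. -/

import Mathlib

set_option linter.unusedSectionVars false
noncomputable section
open Matrix
open scoped ComplexOrder

/-- The standard `2n × 2n` symplectic form matrix `Ω = [[0, I], [-I, 0]]`. -/
def Om (n : ℕ) : Matrix (Fin n ⊕ Fin n) (Fin n ⊕ Fin n) ℝ :=
  Matrix.fromBlocks 0 1 (-1) 0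

/-- Complexification of a real matrix. -/
def cm {k l : Type*} (A : Matrix k l ℝ) : Matrix k l ℂ := A.map Complex.ofReal



variable {k : Type*} [Fintype k] [DecidableEq k]

lemma cm_mul (A B : Matrix k k ℝ) : cm (A * B) = cm A * cm B :=
  Matrix.map_mul (f := Complex.ofRealHom)

lemma cm_one : cm (1 : Matrix k k ℝ) = 1 := Matrix.map_one _ Complex.ofReal_zero Complex.ofReal_one

lemma cm_add (A B : Matrix k k ℝ) : cm (A + B) = cm A + cm B := Matrix.map_add _ Complex.ofReal_add _ _

lemma cm_pow (A : Matrix k k ℝ) (m : ℕ) : cm (A ^ m) = cm A ^ m := by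
  induction m with
  | zero => simpa using cm_one
  | succ m ih => rw [pow_succ, pow_succ, cm_mul, ih]

lemma cm_transpose (A : Matrix k k ℝ) : (cm A)ᵀ = cm Aᵀ := rfl

lemma cm_det (A : Matrix k k ℝ) : (cm A).det = (A.det : ℂ) := (RingHom.map_det Complex.ofRealHom A).symm

lemma Om_mul_Om (n : ℕ) : Om n * Om n = -1 := by
  simp [Om, Matrix.fromBlocks_multiply]
  ext (i|i) (j|j) <;> simp [Matrix.fromBlocks, Matrix.one_apply]

lemma Om_transpose (n : ℕ) : (Om n)ᵀ = -Om n := by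
  simp [Om, Matrix.fromBlocks_transpose]
  ext (i|i) (j|j) <;> simp [Matrix.fromBlocks, Matrix.one_apply]

lemma eval_charpoly' {m : Type*} [Fintype m] [DecidableEq m] (M : Matrix m m ℂ) (μ : ℂ) :
    M.charpoly.eval μ = (μ • (1 : Matrix m m ℂ) - M).det := by
  rw [Matrix.charpoly, eval_det, matPolyEquiv_charmatrix]
  simp [smul_eq_diagonal_mul, Matrix.scalar, algebraMap, Pi.algebra]
  rfl

lemma charpoly_root_det {m : Type*} [Fintype m] [DecidableEq m] {M : Matrix m m ℂ} {μ : ℂ}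
    (h : M.charpoly.IsRoot μ) : (μ • (1 : Matrix m m ℂ) - M).det = 0 := by
  rw [← eval_charpoly']; exact h

lemma det_to_charpoly_root {m : Type*} [Fintype m] [DecidableEq m] {M : Matrix m m ℂ} {μ : ℂ}
    (h : (μ • (1 : Matrix m m ℂ) - M).det = 0) : M.charpoly.IsRoot μ := by
  rwa [Polynomial.IsRoot, eval_charpoly']

lemma part1 (n : ℕ) (V : Matrix (Fin n ⊕ Fin n) (Fin n ⊕ Fin n) ℝ)
    (hV : V.IsSymm)
    (hVpd : (cm V + Complex.I • cm (Om n)).PosDef) :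
    ∀ μ : ℂ, (cm (V * Om n)).charpoly.IsRoot μ → μ.re = 0 ∧ 1 < ‖μ‖ := by
  intro μ hμ
  set W := cm V with hWdef
  set J := cm (Om n) with hJdef
  have hJJ : J * J = -1 := by
    rw [← cm_mul, Om_mul_Om]
    ext i j; simp [cm, Matrix.one_apply]; split <;> simp
  -- get eigenvector
  have hdet : ((W * J) - μ • 1).det = 0 := by
    have h0 : (μ • (1 : Matrix _ _ ℂ) - W * J).det = 0 := by
      have := charpoly_root_det hμ; rwa [cm_mul] at this
    have : ((W * J) - μ • 1) = -(μ • 1 - W * J) := by rw [neg_sub]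
    rw [this, Matrix.det_neg, h0, mul_zero]
  obtain ⟨x, hx0, hx⟩ := (Matrix.exists_mulVec_eq_zero_iff).2 hdet
  have hxEig : (W * J) *ᵥ x = μ • x := by
    have := hx
    rw [Matrix.sub_mulVec, sub_eq_zero] at this
    rw [this, Matrix.smul_mulVec, Matrix.one_mulVec]
  set y : (Fin n ⊕ Fin n) → ℂ := J *ᵥ x with hydef
  have hJy : J *ᵥ y = -x := by
    rw [hydef, Matrix.mulVec_mulVec, hJJ]
    simp [Matrix.neg_mulVec, Matrix.one_mulVec]
  have hy0 : y ≠ 0 := by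
    intro h
    apply hx0
    have : J *ᵥ y = 0 := by rw [h, Matrix.mulVec_zero]
    rw [hJy] at this
    simpa using this.symm ▸ (neg_eq_zero.mp this)
  have hWy : W *ᵥ y = (-μ) • (J *ᵥ y) := by
    rw [hJy]
    have hWy' : W *ᵥ y = μ • x := by rw [hydef, ← hxEig, Matrix.mulVec_mulVec]
    rw [hWy']; simp
  set p : ℂ := star y ⬝ᵥ (W *ᵥ y) with hpdef
  set q : ℂ := star y ⬝ᵥ (J *ᵥ y) with hqdef
  have hpq : p = -μ * q := by
    rw [hpdef, hWy, hqdef]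
    simp [dotProduct_smul, smul_eq_mul]
  have hP1 : 0 < p + Complex.I * q := by
    have := hVpd.dotProduct_mulVec_pos hy0
    simpa [Matrix.add_mulVec, Matrix.smul_mulVec, dotProduct_add, dotProduct_smul,
      smul_eq_mul, hpdef, hqdef] using this
  have hT : (W - Complex.I • J).PosDef := by
    have h1 := hVpd.transpose
    have hWT : Wᵀ = W := by rw [hWdef, cm_transpose, hV]
    have hJT : Jᵀ = -J := by
      rw [hJdef, cm_transpose, Om_transpose]; ext i j; simp [cm]
    rwa [Matrix.transpose_add, Matrix.transpose_smul, hWT, hJT, smul_neg,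
      ← sub_eq_add_neg] at h1
  have hP2 : 0 < p - Complex.I * q := by
    have := hT.dotProduct_mulVec_pos hy0
    simpa [Matrix.sub_mulVec, Matrix.smul_mulVec, dotProduct_sub, dotProduct_smul,
      smul_eq_mul, hpdef, hqdef] using this
  rw [Complex.lt_def] at hP1 hP2
  obtain ⟨h1r, h1i⟩ := hP1
  obtain ⟨h2r, h2i⟩ := hP2
  simp [Complex.add_re, Complex.add_im, Complex.sub_re, Complex.sub_im, Complex.mul_re,
    Complex.mul_im, Complex.I_re, Complex.I_im] at h1r h1i h2r h2i
  have hpim : p.im = 0 := by linarith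
  have hqre : q.re = 0 := by linarith
  rw [Complex.ext_iff] at hpq
  obtain ⟨e1, e2⟩ := hpq
  simp [Complex.mul_re, Complex.mul_im, Complex.neg_re, Complex.neg_im, hpim, hqre] at e1 e2
  have ha : 0 < p.re := by linarith
  have ht0 : q.im ≠ 0 := by
    intro h; rw [h, mul_zero] at e1; linarith
  have hμre : μ.re = 0 := e2.resolve_right ht0
  refine ⟨hμre, ?_⟩
  have habs2 : 1 < ‖μ‖ ^ 2 := by
    rw [Complex.sq_norm, Complex.normSq_apply, hμre]
    have h3 : 0 < (p.re - q.im) * (p.re + q.im) := mul_pos (by linarith) (by linarith)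
    have e1' : p.re * p.re = (μ.im * q.im) * (μ.im * q.im) := by rw [e1]
    nlinarith [mul_self_pos.mpr ht0]
  nlinarith [norm_nonneg μ]


lemma part2 (n : ℕ) (V : Matrix (Fin n ⊕ Fin n) (Fin n ⊕ Fin n) ℝ)
    (hV : V.IsSymm)
    (hVpd : (cm V + Complex.I • cm (Om n)).PosDef) :
    ∀ ν : ℂ, (cm ((V * Om n) ^ 2)).charpoly.IsRoot ν → ν.im = 0 ∧ ν.re < -1 := by
  intro ν hν
  set A := cm (V * Om n) with hAdef
  have key : ∀ μ' : ℂ, A.charpoly.IsRoot μ' → μ' ^ 2 = ν → ν.im = 0 ∧ ν.re < -1 := by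
    intro μ' hroot hsq
    obtain ⟨hre, habs⟩ := part1 n V hV hVpd μ' hroot
    have habs2 : 1 < ‖μ'‖ ^ 2 := by nlinarith [norm_nonneg μ']
    rw [Complex.sq_norm, Complex.normSq_apply, hre] at habs2
    constructor
    · rw [← hsq, pow_two, Complex.mul_im, hre]; ring
    · rw [← hsq, pow_two, Complex.mul_re, hre]; nlinarith
  have hdet : (ν • (1 : Matrix (Fin n ⊕ Fin n) (Fin n ⊕ Fin n) ℂ) - A ^ 2).det = 0 := by
    have := charpoly_root_det hν; rwa [cm_pow] at this
  obtain ⟨μ, hμsq⟩ := IsAlgClosed.exists_pow_nat_eq ν (n := 2) two_pos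
  have hfact : (μ • (1 : Matrix (Fin n ⊕ Fin n) (Fin n ⊕ Fin n) ℂ) - A) * (μ • 1 + A)
      = ν • 1 - A ^ 2 := by
    rw [← hμsq, pow_two, pow_two]
    simp [sub_mul, mul_add, Matrix.smul_mul, Matrix.mul_smul, smul_smul, smul_add,
      smul_sub, neg_smul]
  rw [← hfact, Matrix.det_mul] at hdet
  rcases mul_eq_zero.mp hdet with h | h
  · exact key μ (det_to_charpoly_root h) hμsq
  · have h' : ((-μ) • (1 : Matrix (Fin n ⊕ Fin n) (Fin n ⊕ Fin n) ℂ) - A).det = 0 := by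
      have : (-μ) • (1 : Matrix (Fin n ⊕ Fin n) (Fin n ⊕ Fin n) ℂ) - A = -(μ • 1 + A) := by
        rw [neg_add, neg_smul, sub_eq_add_neg]
      rw [this, Matrix.det_neg, h, mul_zero]
    exact key (-μ) (det_to_charpoly_root h') (by rw [neg_pow, hμsq]; simp)


lemma part3 (n : ℕ) (V : Matrix (Fin n ⊕ Fin n) (Fin n ⊕ Fin n) ℝ)
    (hV : V.IsSymm)
    (hVpd : (cm V + Complex.I • cm (Om n)).PosDef) :
    ∀ κ : ℂ, (cm (1 + ((V * Om n)⁻¹) ^ 2)).charpoly.IsRoot κ →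
      κ.im = 0 ∧ 0 < κ.re ∧ κ.re < 1 := by
  intro κ hκ
  set A := cm (V * Om n) with hAdef
  have hdetA : A.det ≠ 0 := by
    intro h
    have h0 : ((0 : ℂ) • (1 : Matrix (Fin n ⊕ Fin n) (Fin n ⊕ Fin n) ℂ) - A).det = 0 := by
      rw [zero_smul, zero_sub, Matrix.det_neg, h, mul_zero]
    have := (part1 n V hV hVpd 0 (det_to_charpoly_root h0)).2
    simp at this
    exact absurd this (by norm_num)
  have hdetAR : (V * Om n).det ≠ 0 := by
    intro h; apply hdetA; rw [hAdef, cm_det, h]; simp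
  have hUnit : IsUnit (V * Om n).det := isUnit_iff_ne_zero.mpr hdetAR
  have hAunit : IsUnit A.det := isUnit_iff_ne_zero.mpr hdetA
  have hinv : cm ((V * Om n)⁻¹) = A⁻¹ := by
    symm
    apply Matrix.inv_eq_right_inv
    rw [hAdef, ← cm_mul, Matrix.mul_nonsing_inv _ hUnit, cm_one]
  have hcm : cm (1 + ((V * Om n)⁻¹) ^ 2) = 1 + (A⁻¹) ^ 2 := by
    rw [cm_add, cm_one, cm_pow, hinv]
  have hdet : (κ • (1 : Matrix (Fin n ⊕ Fin n) (Fin n ⊕ Fin n) ℂ) - (1 + (A⁻¹) ^ 2)).det = 0 := by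
    have := charpoly_root_det hκ; rwa [hcm] at this
  have hBA : (A⁻¹) ^ 2 * A ^ 2 = 1 := by
    rw [pow_two, pow_two, Matrix.mul_assoc, ← Matrix.mul_assoc A⁻¹ A A,
      Matrix.nonsing_inv_mul _ hAunit, Matrix.one_mul, Matrix.nonsing_inv_mul _ hAunit]
  have hdet2 : ((κ - 1) • A ^ 2 - 1).det = 0 := by
    have hmul : (κ • (1 : Matrix (Fin n ⊕ Fin n) (Fin n ⊕ Fin n) ℂ) - (1 + (A⁻¹) ^ 2)) * A ^ 2
        = (κ - 1) • A ^ 2 - 1 := by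
      rw [sub_mul, add_mul, Matrix.smul_mul, Matrix.one_mul, hBA, sub_smul, one_smul]
      abel
    rw [← hmul, Matrix.det_mul, hdet, zero_mul]
  have hκ1 : κ ≠ 1 := by
    intro h
    rw [h, sub_self, zero_smul, zero_sub, Matrix.det_neg, Matrix.det_one, mul_one] at hdet2
    exact pow_ne_zero _ (neg_ne_zero.mpr one_ne_zero) hdet2
  set c := κ - 1 with hcdef
  have hc0 : c ≠ 0 := sub_ne_zero.mpr hκ1
  have hdet3 : (c⁻¹ • (1 : Matrix (Fin n ⊕ Fin n) (Fin n ⊕ Fin n) ℂ) - A ^ 2).det = 0 := by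
    have heq : c • (c⁻¹ • (1 : Matrix (Fin n ⊕ Fin n) (Fin n ⊕ Fin n) ℂ) - A ^ 2)
        = -(c • A ^ 2 - 1) := by
      rw [smul_sub, smul_smul, mul_inv_cancel₀ hc0, one_smul, neg_sub]
    have h4 : (c • (c⁻¹ • (1 : Matrix (Fin n ⊕ Fin n) (Fin n ⊕ Fin n) ℂ) - A ^ 2)).det = 0 := by
      rw [heq, Matrix.det_neg, hdet2, mul_zero]
    rw [Matrix.det_smul] at h4
    exact (mul_eq_zero.mp h4).resolve_left (pow_ne_zero _ hc0)
  have hroot2 : (cm ((V * Om n) ^ 2)).charpoly.IsRoot c⁻¹ := by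
    rw [cm_pow]; exact det_to_charpoly_root hdet3
  obtain ⟨hνim, hνre⟩ := part2 n V hV hVpd c⁻¹ hroot2
  set r := (c⁻¹).re with hrdef
  have hν : (c⁻¹ : ℂ) = (r : ℂ) := by
    apply Complex.ext <;> simp [hνim, hrdef]
  have hrlt : r < -1 := hνre
  have hrne : r ≠ 0 := ne_of_lt (by linarith)
  have hrr : r * r⁻¹ = 1 := mul_inv_cancel₀ hrne
  have hc : c = ((r⁻¹ : ℝ) : ℂ) := by
    rw [Complex.ofReal_inv, ← hν, inv_inv]
  have hκeq : κ = 1 + c := by rw [hcdef]; ring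
  refine ⟨?_, ?_, ?_⟩
  · rw [hκeq, hc]; simp
  · rw [hκeq, hc]; simp only [Complex.add_re, Complex.one_re, Complex.ofReal_re]
    nlinarith
  · rw [hκeq, hc]; simp only [Complex.add_re, Complex.one_re, Complex.ofReal_re]
    nlinarith

/-- If `V` is real symmetric with `V + iΩ ≻ 0`, then every complex eigenvalue `μ` of `VΩ` is
purely imaginary with `|μ| > 1`; equivalently, every complex eigenvalue of `(VΩ)²` is a real
number strictly less than `-1`, so that `I + (VΩ)⁻²` has all its eigenvalues real and strictly
between `0` and `1`. -/
theorem symplectic_eigenvalues_of_faithful_covariance (n : ℕ)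
    (V : Matrix (Fin n ⊕ Fin n) (Fin n ⊕ Fin n) ℝ)
    (hV : V.IsSymm)
    (hVpd : (cm V + Complex.I • cm (Om n)).PosDef) :
    (∀ μ : ℂ, (cm (V * Om n)).charpoly.IsRoot μ → μ.re = 0 ∧ 1 < ‖μ‖)
      ∧ (∀ μ : ℂ, (cm ((V * Om n) ^ 2)).charpoly.IsRoot μ → μ.im = 0 ∧ μ.re < -1)
      ∧ (∀ μ : ℂ, (cm (1 + ((V * Om n)⁻¹) ^ 2)).charpoly.IsRoot μ →
          μ.im = 0 ∧ 0 < μ.re ∧ μ.re < 1) :=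
  ⟨part1 n V hV hVpd, part2 n V hV hVpd, part3 n V hV hVpd⟩
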